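/- For every real number x* the point K₇(x*) = (x*, 1 − x*, 0) (a mixed state of altruistic punishers and non-punishing cooperators) is an equilibrium of F, and charpoly(J(K₇(x*))) = X · (X − (ε − 1)) · (X − (b − 1 − β x*)). -/

import Mathlib

noncomputable section

open Polynomial

/-- Payoff of altruistic punishers. -/
def PiAP (γ x y z : ℝ) : ℝ := x + y - γ * z

/-- Payoff of non-punishing cooperators. -/
def PiNC (x y : ℝ) : ℝ := x + y

/-- Payoff of defectors. -/
def PiD (b β x y : ℝ) : ℝ := (b - β) * x + b * y

/-- First component of the reduced replicator vector field. -/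
def fRep (b β γ ε x y z : ℝ) : ℝ :=
  x * ((1 - x) * (PiAP γ x y z - ε) - y * (PiNC x y - ε) - z * (PiD b β x y - ε))

/-- Second component of the reduced replicator vector field. -/
def gRep (b β γ ε x y z : ℝ) : ℝ :=
  y * ((1 - y) * (PiNC x y - ε) - x * (PiAP γ x y z - ε) - z * (PiD b β x y - ε))

/-- Third component of the reduced replicator vector field. -/
def hRep (b β γ ε x y z : ℝ) : ℝ :=
  z * ((1 - z) * (PiD b β x y - ε) - y * (PiNC x y - ε) - x * (PiAP γ x y z - ε))

/-- The reduced replicator vector field `F : ℝ³ → ℝ³`. -/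
def Fv (b β γ ε : ℝ) (p : ℝ × ℝ × ℝ) : ℝ × ℝ × ℝ :=
  (fRep b β γ ε p.1 p.2.1 p.2.2,
   gRep b β γ ε p.1 p.2.1 p.2.2,
   hRep b β γ ε p.1 p.2.1 p.2.2)

/-- Partial derivative in the first variable. -/
def pd1 (F : ℝ → ℝ → ℝ → ℝ) (p : ℝ × ℝ × ℝ) : ℝ :=
  deriv (fun x => F x p.2.1 p.2.2) p.1

/-- Partial derivative in the second variable. -/
def pd2 (F : ℝ → ℝ → ℝ → ℝ) (p : ℝ × ℝ × ℝ) : ℝ :=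
  deriv (fun y => F p.1 y p.2.2) p.2.1

/-- Partial derivative in the third variable. -/
def pd3 (F : ℝ → ℝ → ℝ → ℝ) (p : ℝ × ℝ × ℝ) : ℝ :=
  deriv (fun z => F p.1 p.2.1 z) p.2.2

/-- The Jacobian matrix of the reduced replicator vector field at `p`. -/
def Jac (b β γ ε : ℝ) (p : ℝ × ℝ × ℝ) : Matrix (Fin 3) (Fin 3) ℝ :=
  !![pd1 (fRep b β γ ε) p, pd2 (fRep b β γ ε) p, pd3 (fRep b β γ ε) p;
     pd1 (gRep b β γ ε) p, pd2 (gRep b β γ ε) p, pd3 (gRep b β γ ε) p;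
     pd1 (hRep b β γ ε) p, pd2 (hRep b β γ ε) p, pd3 (hRep b β γ ε) p]

/-- the line `K₇(x*) = (x*, 1 - x*, 0)` of mixed cooperator
equilibria and the characteristic polynomial of the Jacobian there. -/


lemma deriv_cubic (F : ℝ → ℝ) (c3 c2 c1 c0 t : ℝ)
    (h : ∀ x, F x = c3*x^3 + c2*x^2 + c1*x + c0) :
    deriv F t = 3*c3*t^2 + 2*c2*t + c1 := by
  have hF : F = fun x => c3*x^3 + c2*x^2 + c1*x + c0 := funext h
  subst hF
  have h1 : HasDerivAt (fun x : ℝ => c3*x^3 + c2*x^2 + c1*x + c0)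
      (3*c3*t^2 + 2*c2*t + c1) t := by
    have := ((((hasDerivAt_pow 3 t).const_mul c3).add
        ((hasDerivAt_pow 2 t).const_mul c2)).add
        (((hasDerivAt_id t).const_mul c1).add (hasDerivAt_const t c0)))
    convert this using 1
    · rfl
    · rfl
    · funext x; simp only [Pi.add_apply, id_eq]; ring
    · push_cast; ring
  exact h1.deriv

theorem K7_equilibrium_charpoly (b β γ ε : ℝ)
    (hb : 1 < b) (hβ : 0 < β) (hγ : 0 < γ) (hε : ε < 1) (xs : ℝ) :
    Fv b β γ ε (xs, 1 - xs, 0) = (0, 0, 0) ∧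
    (Jac b β γ ε (xs, 1 - xs, 0)).charpoly =
      X * (X - C (ε - 1)) * (X - C (b - 1 - β * xs)) := by
  constructor
  · simp only [Fv, fRep, gRep, hRep, PiAP, PiNC, PiD, Prod.mk.injEq]
    refine ⟨by ring, by ring, by ring⟩
  · have h11 : pd1 (fRep b β γ ε) (xs, 1 - xs, 0) = xs * (ε - 1) := by
      rw [pd1,
        deriv_cubic _ (-1) (1 - 2*(1-xs) + ε) (((1-xs) - ε)*(1 - (1-xs))) 0 xs
          (by intro x; simp only [fRep, PiAP, PiNC, PiD]; ring)]
      ring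
    have h12 : pd2 (fRep b β γ ε) (xs, 1 - xs, 0) = xs * (ε - 1) := by
      rw [pd2,
        deriv_cubic _ 0 (-xs) (xs*(1 - 2*xs + ε)) (xs*(xs - ε)*(1 - xs)) (1 - xs)
          (by intro y; simp only [fRep, PiAP, PiNC, PiD]; ring)]
      ring
    have h13 : pd3 (fRep b β γ ε) (xs, 1 - xs, 0) =
        xs * (-(1-xs)*γ - (b - β*xs - ε)) := by
      rw [pd3,
        deriv_cubic _ 0 0 (xs * (-(1-xs)*γ - (b - β*xs - ε))) 0 0
          (by intro z; simp only [fRep, PiAP, PiNC, PiD]; ring)]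
      ring
    have h21 : pd1 (gRep b β γ ε) (xs, 1 - xs, 0) = (1 - xs) * (ε - 1) := by
      rw [pd1,
        deriv_cubic _ 0 (-(1-xs)) ((1-xs)*(1 - 2*(1-xs) + ε))
          ((1-xs)*((1-xs) - ε)*(1 - (1-xs))) xs
          (by intro x; simp only [gRep, PiAP, PiNC, PiD]; ring)]
      ring
    have h22 : pd2 (gRep b β γ ε) (xs, 1 - xs, 0) = (1 - xs) * (ε - 1) := by
      rw [pd2,
        deriv_cubic _ (-1) (1 - 2*xs + ε) ((xs - ε)*(1 - xs)) 0 (1 - xs)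
          (by intro y; simp only [gRep, PiAP, PiNC, PiD]; ring)]
      ring
    have h23 : pd3 (gRep b β γ ε) (xs, 1 - xs, 0) =
        (1 - xs) * (xs*γ - (b - β*xs - ε)) := by
      rw [pd3,
        deriv_cubic _ 0 0 ((1-xs) * (xs*γ - (b - β*xs - ε))) 0 0
          (by intro z; simp only [gRep, PiAP, PiNC, PiD]; ring)]
      ring
    have h31 : pd1 (hRep b β γ ε) (xs, 1 - xs, 0) = 0 := by
      rw [pd1,
        deriv_cubic _ 0 0 0 0 xs
          (by intro x; simp only [hRep, PiAP, PiNC, PiD]; ring)]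
      ring
    have h32 : pd2 (hRep b β γ ε) (xs, 1 - xs, 0) = 0 := by
      rw [pd2,
        deriv_cubic _ 0 0 0 0 (1 - xs)
          (by intro y; simp only [hRep, PiAP, PiNC, PiD]; ring)]
      ring
    have h33 : pd3 (hRep b β γ ε) (xs, 1 - xs, 0) = b - β*xs - 1 := by
      rw [pd3,
        deriv_cubic _ 0 (xs*γ - (b - β*xs - ε)) (b - β*xs - 1) 0 0
          (by intro z; simp only [hRep, PiAP, PiNC, PiD]; ring)]
      ring
    rw [Matrix.charpoly, Jac, h11, h12, h13, h21, h22, h23, h31, h32, h33]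
    rw [Matrix.det_fin_three]
    simp [Matrix.charmatrix, Matrix.smul_apply, Matrix.one_apply, map_sub, map_mul,
      map_add, C_0, C_1]
    ring_nf
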